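/- Let H : I → M_{2n}(ℂ) be continuous and symmetric-valued and let S : I → M_{2n}(ℂ) solve Ṡ = ΩHS with S(0) = I. Define the real 4n×4n matrix function Φ(t) := [[Ω Re S(t) Ωᵀ, Ω Im S(t)],[−Im S(t) Ωᵀ, Re S(t)]] (2n×2n block form). Then Φ(0) = I and Φ satisfies the linear Hamiltonian equation Φ̇ = [[0, −I],[I, 0]] · [[−Ωᵀ(Im H)Ω, Ω(Re H)],[−(Re H)Ω, Im H]] · Φ on the doubled phase space ℝ²ⁿ×ℝ²ⁿ. -/

import Mathlib

open Matrix

noncomputable section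

/-- The standard symplectic matrix `Ω = [[0, −I],[I, 0]]` on `ℝ²ⁿ`. -/
def Omg (n : ℕ) : Matrix (Fin n ⊕ Fin n) (Fin n ⊕ Fin n) ℝ :=
  fromBlocks 0 (-1) 1 0

/-- The complexification of `Ω`. -/
def OmgC (n : ℕ) : Matrix (Fin n ⊕ Fin n) (Fin n ⊕ Fin n) ℂ :=
  (Omg n).map Complex.ofReal

/-- Componentwise real part of a complex matrix. -/
def matRe {m k : Type*} (A : Matrix m k ℂ) : Matrix m k ℝ := A.map Complex.re

/-- Componentwise imaginary part of a complex matrix. -/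
def matIm {m k : Type*} (A : Matrix m k ℂ) : Matrix m k ℝ := A.map Complex.im

/-- The standard symplectic-type matrix `[[0,−I],[I,0]]` on the doubled phase space
`ℝ²ⁿ×ℝ²ⁿ`. -/
def bigOm (n : ℕ) :
    Matrix ((Fin n ⊕ Fin n) ⊕ (Fin n ⊕ Fin n)) ((Fin n ⊕ Fin n) ⊕ (Fin n ⊕ Fin n)) ℝ :=
  fromBlocks 0 (-1) 1 0

set_option linter.unusedSectionVars false

lemma Omg_mul_Omg (n : ℕ) : Omg n * Omg n = -1 := by
  simp [Omg, fromBlocks_multiply, ← fromBlocks_one, fromBlocks_neg]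

lemma Omg_transpose (n : ℕ) : (Omg n)ᵀ = -(Omg n) := by
  simp [Omg, fromBlocks_transpose, fromBlocks_neg]

lemma Omg_mul_Omg_transpose (n : ℕ) : Omg n * (Omg n)ᵀ = 1 := by
  rw [Omg_transpose, Matrix.mul_neg, Omg_mul_Omg]; simp

variable {ι : Type*} [Fintype ι] [DecidableEq ι]

lemma matRe_one : matRe (1 : Matrix ι ι ℂ) = 1 := by
  ext i j; simp [matRe, Matrix.one_apply]; split <;> simp

lemma matIm_one : matIm (1 : Matrix ι ι ℂ) = 0 := by
  ext i j; simp [matIm, Matrix.one_apply]; split <;> simp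

lemma matRe_mul (A B : Matrix ι ι ℂ) :
    matRe (A * B) = matRe A * matRe B - matIm A * matIm B := by
  ext i j
  simp [matRe, matIm, Matrix.mul_apply, Complex.mul_re, Finset.sum_sub_distrib]

lemma matIm_mul (A B : Matrix ι ι ℂ) :
    matIm (A * B) = matRe A * matIm B + matIm A * matRe B := by
  ext i j
  simp [matRe, matIm, Matrix.mul_apply, Complex.mul_im, Finset.sum_add_distrib]

lemma matRe_realmul (A : Matrix ι ι ℝ) (B : Matrix ι ι ℂ) :
    matRe (A.map Complex.ofReal * B) = A * matRe B := by
  ext i j; simp [matRe, Matrix.mul_apply]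

lemma matIm_realmul (A : Matrix ι ι ℝ) (B : Matrix ι ι ℂ) :
    matIm (A.map Complex.ofReal * B) = A * matIm B := by
  ext i j; simp [matIm, Matrix.mul_apply]

lemma deriv_entry (A B : Matrix ι ι ℝ) {f : ℝ → Matrix ι ι ℂ} {D : Matrix ι ι ℂ}
    {I : Set ℝ} {t : ℝ}
    (hf : ∀ a b, HasDerivWithinAt (fun s => f s a b) (D a b) I t) (L : ℂ →L[ℝ] ℝ) (i j : ι) :
    HasDerivWithinAt (fun s => (A * (f s).map L * B) i j) ((A * D.map L * B) i j) I t := by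
  have key : ∀ (M : Matrix ι ι ℂ),
      (A * M.map L * B) i j = ∑ l, ∑ k, A i k * L (M k l) * B l j := by
    intro M
    simp [Matrix.mul_apply, Finset.sum_mul, Matrix.map_apply, mul_assoc]
  simp only [key]
  refine HasDerivWithinAt.fun_sum fun l _ => HasDerivWithinAt.fun_sum fun k _ => ?_
  have h1 := L.hasFDerivAt.comp_hasDerivWithinAt t (hf k l)
  simpa [Function.comp] using (h1.const_mul (A i k)).mul_const (B l j)

lemma matRe_eq_map (M : Matrix ι ι ℂ) : matRe M = M.map Complex.reCLM := rfl
lemma matIm_eq_map (M : Matrix ι ι ℂ) : matIm M = M.map Complex.imCLM := rfl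

lemma deriv_entry_re (A B : Matrix ι ι ℝ) {f : ℝ → Matrix ι ι ℂ} {D : Matrix ι ι ℂ}
    {I : Set ℝ} {t : ℝ}
    (hf : ∀ a b, HasDerivWithinAt (fun s => f s a b) (D a b) I t) (i j : ι) :
    HasDerivWithinAt (fun s => (A * matRe (f s) * B) i j) ((A * matRe D * B) i j) I t := by
  simp only [matRe_eq_map]; exact deriv_entry A B hf _ i j

lemma deriv_entry_im (A B : Matrix ι ι ℝ) {f : ℝ → Matrix ι ι ℂ} {D : Matrix ι ι ℂ}
    {I : Set ℝ} {t : ℝ}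
    (hf : ∀ a b, HasDerivWithinAt (fun s => f s a b) (D a b) I t) (i j : ι) :
    HasDerivWithinAt (fun s => (A * matIm (f s) * B) i j) ((A * matIm D * B) i j) I t := by
  simp only [matIm_eq_map]; exact deriv_entry A B hf _ i j

lemma block_identity (n : ℕ) (Hm Sm : Matrix (Fin n ⊕ Fin n) (Fin n ⊕ Fin n) ℂ) :
    bigOm n *
      fromBlocks (-((Omg n)ᵀ * matIm Hm * Omg n)) (Omg n * matRe Hm)
        (-(matRe Hm * Omg n)) (matIm Hm) *
      fromBlocks (Omg n * matRe Sm * (Omg n)ᵀ) (Omg n * matIm Sm)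
        (-(matIm Sm) * (Omg n)ᵀ) (matRe Sm) =
    fromBlocks (Omg n * matRe (OmgC n * Hm * Sm) * (Omg n)ᵀ)
      (Omg n * matIm (OmgC n * Hm * Sm))
      (-(matIm (OmgC n * Hm * Sm)) * (Omg n)ᵀ) (matRe (OmgC n * Hm * Sm)) := by
  have hD : OmgC n * Hm * Sm = (Omg n).map Complex.ofReal * (Hm * Sm) := by
    rw [OmgC, Matrix.mul_assoc]
  rw [hD, matRe_realmul, matIm_realmul, matRe_mul, matIm_mul, bigOm]
  set J := Omg n
  set Rh := matRe Hm
  set Ih := matIm Hm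
  set Rs := matRe Sm
  set Is := matIm Sm
  have hJ : J * J = -1 := Omg_mul_Omg n
  have hJT : Jᵀ = -J := Omg_transpose n
  have hJJ : ∀ X : Matrix (Fin n ⊕ Fin n) (Fin n ⊕ Fin n) ℝ, J * (J * X) = -X := by
    intro X; rw [← Matrix.mul_assoc, hJ, Matrix.neg_mul, Matrix.one_mul]
  rw [hJT, fromBlocks_multiply, fromBlocks_multiply]
  congr 1 <;>
    simp only [Matrix.mul_assoc, Matrix.neg_mul, Matrix.mul_neg, Matrix.mul_sub,
      Matrix.sub_mul, Matrix.mul_add, Matrix.add_mul, hJJ, Matrix.mul_one,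
      Matrix.one_mul, Matrix.zero_mul, Matrix.mul_zero, neg_neg, neg_sub] <;>
    abel


/-- Let `H` be continuous and symmetric-valued on an interval `I`
containing `0` and `S` solve `Ṡ = ΩHS`, `S(0) = I`. Define
`Φ(t) := [[Ω Re S(t) Ωᵀ, Ω Im S(t)],[−Im S(t) Ωᵀ, Re S(t)]]`. Then `Φ(0) = I` and `Φ`
satisfies the linear Hamiltonian equation
`Φ̇ = [[0,−I],[I,0]]·[[−Ωᵀ(Im H)Ω, Ω Re H],[−(Re H)Ω, Im H]]·Φ` on the doubled phase
space. -/
theorem statement16 (n : ℕ) (I : Set ℝ) (hI : I.OrdConnected) (h0I : (0 : ℝ) ∈ I)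
    (H S : ℝ → Matrix (Fin n ⊕ Fin n) (Fin n ⊕ Fin n) ℂ)
    (hHcont : ∀ i j, ContinuousOn (fun t => H t i j) I)
    (hHsymm : ∀ t ∈ I, (H t)ᵀ = H t)
    (hS : ∀ t ∈ I, ∀ i j,
      HasDerivWithinAt (fun s => S s i j) ((OmgC n * H t * S t) i j) I t)
    (hS0 : S 0 = 1)
    (Φ : ℝ →
      Matrix ((Fin n ⊕ Fin n) ⊕ (Fin n ⊕ Fin n)) ((Fin n ⊕ Fin n) ⊕ (Fin n ⊕ Fin n)) ℝ)
    (hΦ : ∀ t, Φ t = fromBlocks (Omg n * matRe (S t) * (Omg n)ᵀ) (Omg n * matIm (S t))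
      (-(matIm (S t)) * (Omg n)ᵀ) (matRe (S t))) :
    Φ 0 = 1 ∧
    ∀ t ∈ I, ∀ i j,
      HasDerivWithinAt (fun s => Φ s i j)
        ((bigOm n *
          fromBlocks (-((Omg n)ᵀ * matIm (H t) * Omg n)) (Omg n * matRe (H t))
            (-(matRe (H t) * Omg n)) (matIm (H t)) * Φ t) i j)
        I t := by
  constructor
  · rw [hΦ 0, hS0, matRe_one, matIm_one]
    rw [Matrix.mul_one, Omg_mul_Omg_transpose, Matrix.mul_zero, neg_zero,
      Matrix.zero_mul, fromBlocks_one]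
  · intro t ht i j
    rw [hΦ t, block_identity]
    have hd := hS t ht
    rcases i with i | i <;> rcases j with j | j
    · simp only [fromBlocks_apply₁₁, hΦ]
      exact deriv_entry_re _ _ hd i j
    · simp only [fromBlocks_apply₁₂, hΦ]
      have := deriv_entry_im (Omg n) 1 hd i j
      simpa using this
    · simp only [fromBlocks_apply₂₁, hΦ]
      have := deriv_entry_im (-1) ((Omg n)ᵀ) hd i j
      simpa [Matrix.neg_mul] using this
    · simp only [fromBlocks_apply₂₂, hΦ]
      have := deriv_entry_re 1 1 hd i j
      simpa using this
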